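/- arXiv:2207.11503 — 5 statements merged into one kernel-verified Lean document; each statement's English description precedes it below -/
import Mathlib

section
/- Under the stated orthonormality and completeness assumptions, the beta constants satisfy the associativity relation ∑_{i} (β n m i) * (β i k l) = ∑_{i} (β n k i) * (β i m l) for all indices n, m, k, l. -/
/-- Associativity relation of the beta constants:
`∑ i, β n m i * β i k l = ∑ i, β n k i * β i m l`. -/
theorem beta_assoc (N : ℕ) (hN : 0 < N) (C : ℝ) (hC : 0 < C)
    (E : Fin N → Fin N → ℝ)
    (horth : ∀ k l : Fin N, (1 / C) * ∑ i, E k i * E l i = if k = l then 1 else 0)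
    (hcomp : ∀ i j : Fin N, ∑ k, E k i * E k j = C * if i = j then 1 else 0)
    (β : Fin N → Fin N → Fin N → ℝ)
    (hβ : ∀ n m k : Fin N, β n m k = (1 / C) * ∑ i, E n i * E m i * E k i) :
    ∀ (n m k l : Fin N), ∑ i, β n m i * β i k l = ∑ i, β n k i * β i m l := by
  have key : ∀ a b c d : Fin N, ∑ i, β a b i * β i c d
      = (1/C) * ∑ x, E a x * E b x * E c x * E d x := by
    intro a b c d
    calc ∑ i, β a b i * β i c d
        = ∑ i, ∑ x, ∑ y,
            (1/C)*(1/C)*(E a x * E b x * (E c y * E d y)) * (E i x * E i y) := by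
          refine Finset.sum_congr rfl fun i _ => ?_
          rw [hβ, hβ, mul_mul_mul_comm, Finset.sum_mul_sum]
          rw [Finset.mul_sum]
          refine Finset.sum_congr rfl fun x _ => ?_
          rw [Finset.mul_sum]
          exact Finset.sum_congr rfl fun y _ => by ring
      _ = ∑ x, ∑ y, ∑ i,
            (1/C)*(1/C)*(E a x * E b x * (E c y * E d y)) * (E i x * E i y) := by
          rw [Finset.sum_comm]
          exact Finset.sum_congr rfl fun x _ => Finset.sum_comm
      _ = ∑ x, ∑ y,
            (1/C)*(1/C)*(E a x * E b x * (E c y * E d y)) *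
              (C * if x = y then 1 else 0) := by
          refine Finset.sum_congr rfl fun x _ => Finset.sum_congr rfl fun y _ => ?_
          rw [← Finset.mul_sum, hcomp]
      _ = (1/C) * ∑ x, E a x * E b x * E c x * E d x := by
          simp only [mul_ite, mul_one, mul_zero, Finset.sum_ite_eq,
            Finset.mem_univ, if_true]
          rw [Finset.mul_sum]
          refine Finset.sum_congr rfl fun x _ => ?_
          field_simp
  intro n m k l
  rw [key, key]
  refine congrArg _ (Finset.sum_congr rfl fun x _ => by ring)
end

section
/- Under the stated orthonormality and completeness assumptions, for all indices m, k, p one has the triple contraction identity ∑_{i, n, l} (β m n i) * (β i k l) * (β n l p) = C * (β m k p). -/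
lemma collapse_aux (N : ℕ) (C : ℝ) (E : Fin N → Fin N → ℝ)
    (hcomp : ∀ i j : Fin N, ∑ k, E k i * E k j = C * if i = j then 1 else 0)
    (f : Fin N → Fin N → ℝ) :
    ∑ b, ∑ c, f b c * (∑ l, E l b * E l c) = C * ∑ b, f b b := by
  simp_rw [hcomp]
  simp [Finset.mul_sum, mul_comm, mul_left_comm]

lemma gen_contract (N : ℕ) (C : ℝ) (hC : 0 < C) (E : Fin N → Fin N → ℝ)
    (hcomp : ∀ i j : Fin N, ∑ k, E k i * E k j = C * if i = j then 1 else 0)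
    (g h : Fin N → ℝ) :
    ∑ i, ((1/C) * ∑ a, g a * E i a) * ((1/C) * ∑ b, E i b * h b)
      = (1/C) * ∑ a, g a * h a := by
  have hC' : C ≠ 0 := ne_of_gt hC
  have key : ∑ i, ((1/C) * ∑ a, g a * E i a) * ((1/C) * ∑ b, E i b * h b)
      = (1/C) * (1/C) * ∑ a, ∑ b, (g b * h a) * (∑ i, E i a * E i b) := by
    simp_rw [Finset.mul_sum, Finset.sum_mul]
    rw [Finset.sum_comm]
    congr 1; ext a
    rw [Finset.sum_comm]
    congr 1; ext b
    congr 1; ext i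
    ring
  rw [key, collapse_aux N C E hcomp]
  field_simp

/-- Triple contraction identity:
`∑ i n l, β m n i * β i k l * β n l p = C * β m k p`. -/
theorem beta_triple_contraction (N : ℕ) (hN : 0 < N) (C : ℝ) (hC : 0 < C)
    (E : Fin N → Fin N → ℝ)
    (horth : ∀ k l : Fin N, (1 / C) * ∑ i, E k i * E l i = if k = l then 1 else 0)
    (hcomp : ∀ i j : Fin N, ∑ k, E k i * E k j = C * if i = j then 1 else 0)
    (β : Fin N → Fin N → Fin N → ℝ)
    (hβ : ∀ n m k : Fin N, β n m k = (1 / C) * ∑ i, E n i * E m i * E k i) :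
    ∀ (m k p : Fin N),
      ∑ i, ∑ n, ∑ l, β m n i * β i k l * β n l p = C * β m k p := by
  intro m k p
  have hC' : C ≠ 0 := ne_of_gt hC
  -- step 1: collapse the sum over l
  have step1 : ∀ i n : Fin N, ∑ l, β i k l * β n l p
      = (1/C) * ∑ b, (E i b * E k b) * (E n b * E p b) := by
    intro i n
    have e1 : ∀ l, β i k l = (1/C) * ∑ b, (E i b * E k b) * E l b := by
      intro l; rw [hβ]
    have e2 : ∀ l, β n l p = (1/C) * ∑ b, E l b * (E n b * E p b) := by
      intro l; rw [hβ]; congr 1; exact Finset.sum_congr rfl fun b _ => by ring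
    simp_rw [e1, e2]
    exact gen_contract N C hC E hcomp _ _
  -- step 2: collapse the sum over i
  have step2 : ∀ n : Fin N, ∑ i, β m n i * ((1/C) * ∑ b, (E i b * E k b) * (E n b * E p b))
      = (1/C) * ∑ a, (E m a * E n a) * (E k a * (E n a * E p a)) := by
    intro n
    have e1 : ∀ i, β m n i = (1/C) * ∑ a, (E m a * E n a) * E i a := by
      intro i; rw [hβ]
    have e2 : ∀ i, (1/C) * ∑ b, (E i b * E k b) * (E n b * E p b)
        = (1/C) * ∑ b, E i b * (E k b * (E n b * E p b)) := by
      intro i; congr 1; exact Finset.sum_congr rfl fun b _ => by ring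
    simp_rw [e1, e2]
    exact gen_contract N C hC E hcomp _ _
  -- combine
  have hmul : ∀ i n : Fin N, ∑ l, β m n i * β i k l * β n l p
      = β m n i * ∑ l, β i k l * β n l p := by
    intro i n
    rw [Finset.mul_sum]
    exact Finset.sum_congr rfl fun l _ => by ring
  simp_rw [hmul, step1]
  rw [Finset.sum_comm]
  simp_rw [step2]
  -- now: ∑ n, (1/C) * ∑ a, ... = C * β m k p
  rw [← Finset.mul_sum, Finset.sum_comm]
  have : ∀ a : Fin N, ∑ n, (E m a * E n a) * (E k a * (E n a * E p a))
      = (E m a * E k a * E p a) * (C * if a = a then 1 else 0) := by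
    intro a
    rw [← hcomp a a, Finset.mul_sum]
    exact Finset.sum_congr rfl fun n _ => by ring
  simp_rw [this]
  rw [hβ m k p]
  field_simp
  rw [Finset.mul_sum]
  exact Finset.sum_congr rfl fun x _ => by rw [if_pos trivial]; ring
end

section
/- Under the stated orthonormality and completeness assumptions, for all indices m, n one has the double contraction identity ∑_{i, k} (β m i k) * (β i k n) = C * (if n = m then 1 else 0). -/
/-- Double contraction identity:
`∑ i k, β m i k * β i k n = C * δ_{nm}`. -/
theorem beta_double_contraction (N : ℕ) (hN : 0 < N) (C : ℝ) (hC : 0 < C)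
    (E : Fin N → Fin N → ℝ)
    (horth : ∀ k l : Fin N, (1 / C) * ∑ i, E k i * E l i = if k = l then 1 else 0)
    (hcomp : ∀ i j : Fin N, ∑ k, E k i * E k j = C * if i = j then 1 else 0)
    (β : Fin N → Fin N → Fin N → ℝ)
    (hβ : ∀ n m k : Fin N, β n m k = (1 / C) * ∑ i, E n i * E m i * E k i) :
    ∀ (m n : Fin N),
      ∑ i, ∑ k, β m i k * β i k n = C * if n = m then 1 else 0 := by
  intro m n
  have hC' : C ≠ 0 := ne_of_gt hC
  have hsum : ∀ k l : Fin N, (∑ i, E k i * E l i) = C * if k = l then 1 else 0 := by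
    intro k l
    have h := horth k l
    field_simp at h
    rw [h]
  have key : ∀ i k : Fin N, β m i k * β i k n
      = (1/C) * ((1/C) * ∑ a, ∑ b, (E m a * E n b) * ((E i a * E i b) * (E k a * E k b))) := by
    intro i k
    have h2 : (∑ a, E m a * E i a * E k a) * (∑ b, E i b * E k b * E n b)
        = ∑ a, ∑ b, (E m a * E n b) * ((E i a * E i b) * (E k a * E k b)) := by
      rw [Finset.sum_mul_sum]
      exact Finset.sum_congr rfl fun a _ => Finset.sum_congr rfl fun b _ => by ring
    rw [hβ, hβ, mul_mul_mul_comm, h2]; ring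
  have sum4 : ∀ (f : Fin N → Fin N → Fin N → Fin N → ℝ),
      ∑ i, ∑ k, ∑ a, ∑ b, f i k a b = ∑ a, ∑ b, ∑ i, ∑ k, f i k a b := by
    intro f
    calc ∑ i, ∑ k, ∑ a, ∑ b, f i k a b
        = ∑ i, ∑ a, ∑ k, ∑ b, f i k a b :=
          Finset.sum_congr rfl fun i _ => Finset.sum_comm
      _ = ∑ a, ∑ i, ∑ k, ∑ b, f i k a b := Finset.sum_comm
      _ = ∑ a, ∑ i, ∑ b, ∑ k, f i k a b :=
          Finset.sum_congr rfl fun a _ => Finset.sum_congr rfl fun i _ => Finset.sum_comm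
      _ = ∑ a, ∑ b, ∑ i, ∑ k, f i k a b :=
          Finset.sum_congr rfl fun a _ => Finset.sum_comm
  simp only [key, ← Finset.mul_sum]
  rw [sum4]
  have inner : ∀ a b : Fin N,
      (∑ i, ∑ k, (E m a * E n b) * ((E i a * E i b) * (E k a * E k b)))
        = E m a * E n b * ((C * if a = b then 1 else 0) * (C * if a = b then 1 else 0)) := by
    intro a b
    have h3 : (∑ i, E i a * E i b) * (∑ k, E k a * E k b)
        = ∑ i, ∑ k, (E i a * E i b) * (E k a * E k b) := Finset.sum_mul_sum _ _ _ _
    rw [← hcomp a b, h3, Finset.mul_sum]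
    refine Finset.sum_congr rfl fun i _ => ?_
    rw [Finset.mul_sum]
  simp only [inner]
  have collapse : ∀ a : Fin N,
      (∑ b, E m a * E n b * ((C * if a = b then 1 else 0) * (C * if a = b then 1 else 0)))
        = E m a * E n a * (C * C) := by
    intro a
    rw [Finset.sum_eq_single a]
    · simp
    · intro b _ hb; simp [Ne.symm hb]
    · simp
  simp only [collapse, ← Finset.sum_mul]
  rw [hsum m n]
  have : (if m = n then (1:ℝ) else 0) = if n = m then 1 else 0 := by
    simp [eq_comm]
  rw [this]
  ring_nf
  rw [show C ^ 3 * C⁻¹ ^ 2 = C by field_simp]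
end

section
/- For every real number n ≥ 2, Γ(1/n) · Γ(5/n) ≤ 3 · Γ(3/n)². Equivalently, the coefficient b = n^{4/n}·(3Γ(3/n)² − Γ(1/n)Γ(5/n))/Γ(1/n)² of the quartic term in the expansion of −ln Ṽ is nonnegative. -/
open Filter Finset

/-- Key pointwise inequality: for `c ≥ 1`, `0 < x ≤ 1/2`. -/
lemma gamma_quartic_pointwise (x c : ℝ) (hx0 : 0 < x) (hx : x ≤ 1/2) (hc : 1 ≤ c) :
    (2*c+5)*(2*c+1)*(3*x+c)^2 ≤ (2*c+3)^2*((x+c)*(5*x+c)) := by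
  nlinarith [mul_nonneg (mul_nonneg (by linarith : (0:ℝ) ≤ c)
    (by linarith : (0:ℝ) ≤ 1-2*x)) (by nlinarith : (0:ℝ) ≤ (1+2*x)*c + 6*x)]

/-- Key telescoping product inequality. -/
lemma gamma_quartic_prod_ineq (x : ℝ) (hx0 : 0 < x) (hx : x ≤ 1/2) (m : ℕ) :
    (2*(m:ℝ)+5) * (∏ j ∈ Finset.range (m+1), (3*x+(j:ℝ)))^2
      ≤ 3*(2*(m:ℝ)+3) * ∏ j ∈ Finset.range (m+1), ((x+(j:ℝ))*(5*x+(j:ℝ))) := by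
  induction m with
  | zero => simp; nlinarith
  | succ m ih =>
      have hm : (0:ℝ) ≤ (m:ℝ) := Nat.cast_nonneg m
      have hP : (0:ℝ) < ∏ j ∈ Finset.range (m+1), (3*x+(j:ℝ)) := by
        apply Finset.prod_pos; intro j _; positivity
      have hQ : (0:ℝ) < ∏ j ∈ Finset.range (m+1), ((x+(j:ℝ))*(5*x+(j:ℝ))) := by
        apply Finset.prod_pos; intro j _; positivity
      have hstepP : ∏ j ∈ Finset.range (m+1+1), (3*x+(j:ℝ))
          = (∏ j ∈ Finset.range (m+1), (3*x+(j:ℝ))) * (3*x+((m:ℝ)+1)) := by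
        rw [Finset.prod_range_succ]; push_cast; ring
      have hstepQ : ∏ j ∈ Finset.range (m+1+1), ((x+(j:ℝ))*(5*x+(j:ℝ)))
          = (∏ j ∈ Finset.range (m+1), ((x+(j:ℝ))*(5*x+(j:ℝ))))
            * ((x+((m:ℝ)+1))*(5*x+((m:ℝ)+1))) := by
        rw [Finset.prod_range_succ]; push_cast; ring
      rw [hstepP, hstepQ]
      set P := ∏ j ∈ Finset.range (m+1), (3*x+(j:ℝ)) with hPdef
      set Q := ∏ j ∈ Finset.range (m+1), ((x+(j:ℝ))*(5*x+(j:ℝ))) with hQdef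
      set c : ℝ := (m:ℝ)+1 with hcdef
      have hc : (1:ℝ) ≤ c := by rw [hcdef]; linarith
      have key := gamma_quartic_pointwise x c hx0 hx hc
      have h1 : (2*c+5) * (3*x+c)^2 * ((2*(m:ℝ)+5) * P^2)
          ≤ (2*c+5) * (3*x+c)^2 * (3*(2*(m:ℝ)+3) * Q) := by
        apply mul_le_mul_of_nonneg_left ih
        have : (0:ℝ) < 2*c+5 := by linarith
        positivity
      have h2 : (2*c+5)*(2*c+1)*(3*x+c)^2 * (3*Q) ≤ (2*c+3)^2*((x+c)*(5*x+c)) * (3*Q) :=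
        mul_le_mul_of_nonneg_right key (by positivity)
      have e1 : 2*c+1 = 2*(m:ℝ)+3 := by rw [hcdef]; ring
      have e2 : 2*c+3 = 2*(m:ℝ)+5 := by rw [hcdef]; ring
      rw [e1] at h2
      rw [e2] at h2
      have h5 : (0:ℝ) < 2*(m:ℝ)+5 := by linarith
      have goal2 : (2*(m:ℝ)+5) * ((2*((m:ℝ)+1)+5) * (P*(3*x+c))^2)
          ≤ (2*(m:ℝ)+5) * (3*(2*((m:ℝ)+1)+3) * (Q*((x+c)*(5*x+c)))) := by
        have ec : 2*c+5 = 2*((m:ℝ)+1)+5 := by rw [hcdef]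
        rw [ec] at h1 h2
        nlinarith [h1, h2]
      have := le_of_mul_le_mul_left goal2 h5
      push_cast
      linarith [this]

/-- GammaSeq-level inequality. -/
lemma gammaSeq_ineq (x : ℝ) (hx0 : 0 < x) (hx : x ≤ 1/2) (m : ℕ) (hm : 1 ≤ m) :
    Real.GammaSeq x m * Real.GammaSeq (5*x) m ≤ 3 * Real.GammaSeq (3*x) m ^ 2 := by
  have hm0 : (0:ℝ) < m := by exact_mod_cast hm
  have hP : (0:ℝ) < ∏ j ∈ Finset.range (m+1), (3*x+(j:ℝ)) := by
    apply Finset.prod_pos; intro j _; positivity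
  have hA : (0:ℝ) < ∏ j ∈ Finset.range (m+1), (x+(j:ℝ)) := by
    apply Finset.prod_pos; intro j _; positivity
  have hB : (0:ℝ) < ∏ j ∈ Finset.range (m+1), (5*x+(j:ℝ)) := by
    apply Finset.prod_pos; intro j _; positivity
  have hQ : (0:ℝ) < ∏ j ∈ Finset.range (m+1), ((x+(j:ℝ))*(5*x+(j:ℝ))) := by
    apply Finset.prod_pos; intro j _; positivity
  have hprod := gamma_quartic_prod_ineq x hx0 hx m
  have hP3Q : (∏ j ∈ Finset.range (m+1), (3*x+(j:ℝ)))^2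
      ≤ 3 * ∏ j ∈ Finset.range (m+1), ((x+(j:ℝ))*(5*x+(j:ℝ))) := by
    have h5 : (0:ℝ) < 2*(m:ℝ)+5 := by positivity
    nlinarith [hprod, hQ]
  have hAB : (∏ j ∈ Finset.range (m+1), (x+(j:ℝ))) * (∏ j ∈ Finset.range (m+1), (5*x+(j:ℝ)))
      = ∏ j ∈ Finset.range (m+1), ((x+(j:ℝ))*(5*x+(j:ℝ))) := by
    rw [← Finset.prod_mul_distrib]
  have hrpow : (m:ℝ)^x * (m:ℝ)^(5*x) = (m:ℝ)^(6*x) := by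
    rw [← Real.rpow_add hm0]; ring_nf
  have hrpow2 : ((m:ℝ)^(3*x))^2 = (m:ℝ)^(6*x) := by
    rw [← Real.rpow_natCast ((m:ℝ)^(3*x)) 2, ← Real.rpow_mul (le_of_lt hm0)]
    norm_num; ring_nf
  have hfacpos : (0:ℝ) < (Nat.factorial m : ℝ) := by exact_mod_cast Nat.factorial_pos m
  have hfac : (0:ℝ) ≤ (m:ℝ)^(6*x) * (Nat.factorial m : ℝ)^2 := by positivity
  rw [Real.GammaSeq, Real.GammaSeq, Real.GammaSeq]
  rw [div_mul_div_comm, div_pow, ← mul_div_assoc]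
  rw [div_le_div_iff₀ (by rw [hAB]; exact hQ) (by positivity)]
  calc ((m:ℝ)^x * (Nat.factorial m : ℝ)) * ((m:ℝ)^(5*x) * (Nat.factorial m : ℝ))
        * (∏ j ∈ Finset.range (m+1), (3*x+(j:ℝ)))^2
      = ((m:ℝ)^(6*x) * (Nat.factorial m : ℝ)^2)
        * (∏ j ∈ Finset.range (m+1), (3*x+(j:ℝ)))^2 := by rw [← hrpow]; ring
    _ ≤ ((m:ℝ)^(6*x) * (Nat.factorial m : ℝ)^2)
        * (3 * ∏ j ∈ Finset.range (m+1), ((x+(j:ℝ))*(5*x+(j:ℝ)))) :=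
        mul_le_mul_of_nonneg_left hP3Q hfac
    _ = 3 * ((m:ℝ)^(3*x) * (Nat.factorial m : ℝ))^2
        * ((∏ j ∈ Finset.range (m+1), (x+(j:ℝ))) * ∏ j ∈ Finset.range (m+1), (5*x+(j:ℝ))) := by
        rw [hAB, ← hrpow2]; ring

/-- Nonnegativity of the quartic coefficient `b`:
`Γ(1/n) Γ(5/n) ≤ 3 Γ(3/n)²` for `n ≥ 2`. -/
theorem gamma_quartic_coeff_nonneg (n : ℝ) (hn : 2 ≤ n) :
    Real.Gamma (1 / n) * Real.Gamma (5 / n) ≤ 3 * Real.Gamma (3 / n) ^ 2 := by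
  have hn0 : (0:ℝ) < n := by linarith
  set x : ℝ := 1/n with hxdef
  have hx0 : 0 < x := by positivity
  have hx : x ≤ 1/2 := by
    rw [hxdef, div_le_div_iff₀ hn0 (by norm_num)]; linarith
  have h5 : 5/n = 5*x := by rw [hxdef]; ring
  have h3 : 3/n = 3*x := by rw [hxdef]; ring
  rw [h5, h3]
  have hT1 : Tendsto (fun m => Real.GammaSeq x m * Real.GammaSeq (5*x) m) atTop
      (nhds (Real.Gamma x * Real.Gamma (5*x))) :=
    (Real.GammaSeq_tendsto_Gamma x).mul (Real.GammaSeq_tendsto_Gamma (5*x))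
  have hT2 : Tendsto (fun m => 3 * Real.GammaSeq (3*x) m ^ 2) atTop
      (nhds (3 * Real.Gamma (3*x) ^ 2)) :=
    (((Real.GammaSeq_tendsto_Gamma (3*x)).pow 2).const_mul 3)
  apply le_of_tendsto_of_tendsto hT1 hT2
  filter_upwards [eventually_ge_atTop 1] with m hm
  exact gammaSeq_ineq x hx0 hx m hm
end

section
/- For every real number n ≥ 2, 15 · Γ(1/n) · Γ(5/n) · Γ(3/n) ≤ 30 · Γ(3/n)³ + Γ(1/n)² · Γ(7/n). Equivalently, the coefficient c = n^{6/n}·(30Γ(3/n)³ − 15Γ(1/n)Γ(5/n)Γ(3/n) + Γ(1/n)²Γ(7/n))/Γ(1/n)³ of the sextic term in the expansion of −ln Ṽ is nonnegative. -/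
open Real Filter Finset

/-- Per-factor polynomial inequality for the Euler products. -/
lemma gamma_sextic_term_ineq (α i : ℝ) (hα : 0 < α) (hα2 : α ≤ 1/2) (hi : 0 ≤ i) :
    (1/2+i)*(5/2+i)^3*(7*α+i)*(3*α+i)^3 ≤ (α+i)*(5*α+i)^3*(7/2+i)*(3/2+i)^3 := by
  have hq : (α+i)*(5*α+i)^3*(7/2+i)*(3/2+i)^3 - (1/2+i)*(5/2+i)^3*(7*α+i)*(3*α+i)^3
      = (1/2 - α) * ((4*i^5+8*i^4) + α*(8*i^5+80*i^4+128*i^3)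
        + α^2*(16*i^5+160*i^4+616*i^3+720*i^2)
        + α^3*(64*i^4+512*i^3+1440*i^2+1350*i)) := by ring
  have h1 : (0:ℝ) ≤ 1/2 - α := by linarith
  have h2 : (0:ℝ) ≤ (4*i^5+8*i^4) + α*(8*i^5+80*i^4+128*i^3)
        + α^2*(16*i^5+160*i^4+616*i^3+720*i^2)
        + α^3*(64*i^4+512*i^3+1440*i^2+1350*i) := by positivity
  nlinarith [mul_nonneg h1 h2]

/-- Per-`n` inequality between products of `GammaSeq`s. -/
lemma gamma_sextic_seq_ineq (α : ℝ) (hα : 0 < α) (hα2 : α ≤ 1/2) (n : ℕ) :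
    Real.GammaSeq α n * Real.GammaSeq (5*α) n ^ 3 * Real.GammaSeq (7/2) n
        * Real.GammaSeq (3/2) n ^ 3
      ≤ Real.GammaSeq (1/2) n * Real.GammaSeq (5/2) n ^ 3 * Real.GammaSeq (7*α) n
        * Real.GammaSeq (3*α) n ^ 3 := by
  have hP : ∀ s : ℝ, 0 < s → 0 < ∏ j ∈ Finset.range (n+1), (s + (j:ℝ)) := by
    intro s hs
    exact Finset.prod_pos fun j _ => by positivity
  rcases Nat.eq_zero_or_pos n with hn | hn
  · subst hn
    have hz : ∀ s : ℝ, 0 < s → Real.GammaSeq s 0 = 0 := by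
      intro s hs
      simp [Real.GammaSeq, Real.zero_rpow hs.ne']
    rw [hz α hα, hz (5*α) (by linarith), hz (7/2) (by norm_num), hz (3/2) (by norm_num),
      hz (1/2) (by norm_num), hz (5/2) (by norm_num), hz (7*α) (by linarith),
      hz (3*α) (by linarith)]
  · have hN : (0:ℝ) < (n:ℝ) := by exact_mod_cast hn
    have hF : (0:ℝ) < (n.factorial : ℝ) := by exact_mod_cast n.factorial_pos
    set P : ℝ → ℝ := fun s => ∏ j ∈ Finset.range (n+1), (s + (j:ℝ)) with hPdef
    have hG : ∀ s : ℝ, Real.GammaSeq s n = (n:ℝ) ^ s * (n.factorial : ℝ) / P s := fun s => rfl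
    -- rewrite each GammaSeq
    rw [hG, hG, hG, hG, hG, hG, hG, hG]
    have hpow : ∀ s : ℝ, ((n:ℝ) ^ s * (n.factorial : ℝ) / P s) ^ 3
        = (n:ℝ) ^ (3*s) * (n.factorial : ℝ)^3 / (P s)^3 := by
      intro s
      rw [div_pow, mul_pow, ← Real.rpow_natCast ((n:ℝ) ^ s) 3, ← Real.rpow_mul hN.le]
      norm_num [mul_comm]
    rw [hpow, hpow, hpow, hpow]
    have e1 : (n:ℝ) ^ α * (n.factorial : ℝ) / P α * ((n:ℝ) ^ (3*(5*α)) * (n.factorial : ℝ)^3 / (P (5*α))^3)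
        * ((n:ℝ) ^ (7/2:ℝ) * (n.factorial : ℝ) / P (7/2))
        * ((n:ℝ) ^ (3*(3/2:ℝ)) * (n.factorial : ℝ)^3 / (P (3/2))^3)
        = ((n:ℝ) ^ (16*α+8) * (n.factorial : ℝ)^8) / (P α * (P (5*α))^3 * P (7/2) * (P (3/2))^3) := by
      rw [show (16*α+8 : ℝ) = α + 3*(5*α) + 7/2 + 3*(3/2) by ring,
        Real.rpow_add hN, Real.rpow_add hN, Real.rpow_add hN]
      ring
    have e2 : (n:ℝ) ^ (1/2:ℝ) * (n.factorial : ℝ) / P (1/2)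
        * ((n:ℝ) ^ (3*(5/2:ℝ)) * (n.factorial : ℝ)^3 / (P (5/2))^3)
        * ((n:ℝ) ^ (7*α) * (n.factorial : ℝ) / P (7*α))
        * ((n:ℝ) ^ (3*(3*α)) * (n.factorial : ℝ)^3 / (P (3*α))^3)
        = ((n:ℝ) ^ (16*α+8) * (n.factorial : ℝ)^8) / (P (1/2) * (P (5/2))^3 * P (7*α) * (P (3*α))^3) := by
      rw [show (16*α+8 : ℝ) = 1/2 + 3*(5/2) + 7*α + 3*(3*α) by ring,
        Real.rpow_add hN, Real.rpow_add hN, Real.rpow_add hN]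
      ring
    rw [e1, e2]
    have hnum : (0:ℝ) ≤ (n:ℝ) ^ (16*α+8) * (n.factorial : ℝ)^8 := by positivity
    have hDR : (0:ℝ) < P (1/2) * (P (5/2))^3 * P (7*α) * (P (3*α))^3 := by
      have := hP (1/2) (by norm_num)
      have := hP (5/2) (by norm_num)
      have := hP (7*α) (by linarith)
      have := hP (3*α) (by linarith)
      positivity
    refine div_le_div_of_nonneg_left hnum hDR ?_
    -- product comparison, termwise
    have lhs_eq : P (1/2) * (P (5/2))^3 * P (7*α) * (P (3*α))^3
        = ∏ j ∈ Finset.range (n+1),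
            ((1/2+(j:ℝ)) * (5/2+(j:ℝ))^3 * (7*α+(j:ℝ)) * (3*α+(j:ℝ))^3) := by
      simp only [hPdef, ← Finset.prod_pow, ← Finset.prod_mul_distrib]
    have rhs_eq : P α * (P (5*α))^3 * P (7/2) * (P (3/2))^3
        = ∏ j ∈ Finset.range (n+1),
            ((α+(j:ℝ)) * (5*α+(j:ℝ))^3 * (7/2+(j:ℝ)) * (3/2+(j:ℝ))^3) := by
      simp only [hPdef, ← Finset.prod_pow, ← Finset.prod_mul_distrib]
    rw [lhs_eq, rhs_eq]
    refine Finset.prod_le_prod (fun j _ => ?_) (fun j _ => ?_)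
    · have hj : (0:ℝ) ≤ (j:ℝ) := j.cast_nonneg
      positivity
    · exact gamma_sextic_term_ineq α j hα hα2 j.cast_nonneg

/-- Key Gamma inequality: `5 Γ(α) Γ(5α)³ ≤ 9 Γ(3α)³ Γ(7α)` for `0 < α ≤ 1/2`. -/
lemma gamma_sextic_key (α : ℝ) (hα : 0 < α) (hα2 : α ≤ 1/2) :
    5 * Real.Gamma α * Real.Gamma (5*α) ^ 3
      ≤ 9 * Real.Gamma (3*α) ^ 3 * Real.Gamma (7*α) := by
  have t1 : Tendsto (fun n => Real.GammaSeq α n * Real.GammaSeq (5*α) n ^ 3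
      * Real.GammaSeq (7/2) n * Real.GammaSeq (3/2) n ^ 3) atTop
      (nhds (Real.Gamma α * Real.Gamma (5*α) ^ 3 * Real.Gamma (7/2) * Real.Gamma (3/2) ^ 3)) :=
    (((Real.GammaSeq_tendsto_Gamma α).mul
      ((Real.GammaSeq_tendsto_Gamma (5*α)).pow 3)).mul
      (Real.GammaSeq_tendsto_Gamma (7/2))).mul
      ((Real.GammaSeq_tendsto_Gamma (3/2)).pow 3)
  have t2 : Tendsto (fun n => Real.GammaSeq (1/2) n * Real.GammaSeq (5/2) n ^ 3
      * Real.GammaSeq (7*α) n * Real.GammaSeq (3*α) n ^ 3) atTop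
      (nhds (Real.Gamma (1/2) * Real.Gamma (5/2) ^ 3 * Real.Gamma (7*α)
        * Real.Gamma (3*α) ^ 3)) :=
    (((Real.GammaSeq_tendsto_Gamma (1/2)).mul
      ((Real.GammaSeq_tendsto_Gamma (5/2)).pow 3)).mul
      (Real.GammaSeq_tendsto_Gamma (7*α))).mul
      ((Real.GammaSeq_tendsto_Gamma (3*α)).pow 3)
  have hlim : Real.Gamma α * Real.Gamma (5*α) ^ 3 * Real.Gamma (7/2) * Real.Gamma (3/2) ^ 3
      ≤ Real.Gamma (1/2) * Real.Gamma (5/2) ^ 3 * Real.Gamma (7*α) * Real.Gamma (3*α) ^ 3 :=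
    le_of_tendsto_of_tendsto' t1 t2 (gamma_sextic_seq_ineq α hα hα2)
  -- evaluate half-integer Gamma values
  have h12 : Real.Gamma (1/2) = Real.sqrt π := Real.Gamma_one_half_eq
  have h32 : Real.Gamma (3/2) = (1/2) * Real.sqrt π := by
    rw [show (3/2 : ℝ) = 1/2 + 1 by norm_num, Real.Gamma_add_one (by norm_num), h12]
  have h52 : Real.Gamma (5/2) = (3/4) * Real.sqrt π := by
    rw [show (5/2 : ℝ) = 3/2 + 1 by norm_num, Real.Gamma_add_one (by norm_num), h32]
    ring
  have h72 : Real.Gamma (7/2) = (15/8) * Real.sqrt π := by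
    rw [show (7/2 : ℝ) = 5/2 + 1 by norm_num, Real.Gamma_add_one (by norm_num), h52]
    ring
  rw [h12, h32, h52, h72] at hlim
  have hπ : Real.sqrt π ^ 2 = π := Real.sq_sqrt Real.pi_pos.le
  have hπ2 : (0:ℝ) < π^2 := by positivity
  have lhs_eq : Real.Gamma α * Real.Gamma (5*α)^3 * (15/8*Real.sqrt π) * ((1/2)*Real.sqrt π)^3
      = 15/64*π^2*(Real.Gamma α * Real.Gamma (5*α)^3) := by
    rw [show Real.Gamma α * Real.Gamma (5*α)^3 * (15/8*Real.sqrt π) * ((1/2)*Real.sqrt π)^3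
        = 15/64*((Real.sqrt π)^2)^2*(Real.Gamma α * Real.Gamma (5*α)^3) from by ring, hπ]
  have rhs_eq : Real.sqrt π * ((3/4)*Real.sqrt π)^3 * Real.Gamma (7*α) * Real.Gamma (3*α)^3
      = 27/64*π^2*(Real.Gamma (3*α)^3 * Real.Gamma (7*α)) := by
    rw [show Real.sqrt π * ((3/4)*Real.sqrt π)^3 * Real.Gamma (7*α) * Real.Gamma (3*α)^3
        = 27/64*((Real.sqrt π)^2)^2*(Real.Gamma (3*α)^3 * Real.Gamma (7*α)) from by ring, hπ]
  rw [show (15/8*Real.sqrt π : ℝ) = 15/8*Real.sqrt π from rfl] at hlim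
  have h' : π^2 * (15/64*(Real.Gamma α * Real.Gamma (5*α)^3))
      ≤ π^2 * (27/64*(Real.Gamma (3*α)^3 * Real.Gamma (7*α))) := by
    nlinarith [hlim, lhs_eq, rhs_eq]
  have h'' := (mul_le_mul_iff_right₀ hπ2).mp h'
  linarith

/-- Nonnegativity of the sextic coefficient `c`:
`15 Γ(1/n) Γ(5/n) Γ(3/n) ≤ 30 Γ(3/n)³ + Γ(1/n)² Γ(7/n)` for `n ≥ 2`. -/
theorem gamma_sextic_coeff_nonneg (n : ℝ) (hn : 2 ≤ n) :
    15 * Real.Gamma (1 / n) * Real.Gamma (5 / n) * Real.Gamma (3 / n)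
      ≤ 30 * Real.Gamma (3 / n) ^ 3 + Real.Gamma (1 / n) ^ 2 * Real.Gamma (7 / n) := by
  have hn0 : (0:ℝ) < n := by linarith
  set α := 1 / n with hαdef
  have hα : 0 < α := by positivity
  have hα2 : α ≤ 1/2 := by
    rw [hαdef]
    rw [div_le_div_iff₀ hn0 (by norm_num)]
    linarith
  have e5 : (5:ℝ)/n = 5*α := by rw [hαdef]; ring
  have e3 : (3:ℝ)/n = 3*α := by rw [hαdef]; ring
  have e7 : (7:ℝ)/n = 7*α := by rw [hαdef]; ring
  rw [e5, e3, e7]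
  set a := Real.Gamma α with ha'
  set b := Real.Gamma (3*α) with hb'
  set c := Real.Gamma (5*α) with hc'
  set d := Real.Gamma (7*α) with hd'
  have ha : 0 < a := Real.Gamma_pos_of_pos hα
  have hb : 0 < b := Real.Gamma_pos_of_pos (by linarith)
  have hc : 0 < c := Real.Gamma_pos_of_pos (by linarith)
  have hd : 0 < d := Real.Gamma_pos_of_pos (by linarith)
  have hkey : 5 * a * c ^ 3 ≤ 9 * b ^ 3 * d := gamma_sextic_key α hα hα2
  -- 9 b³ (30 b³ + a² d - 15 a b c) ≥ 270 b⁶ + 5 a³ c³ - 135 a b⁴ c = 5 (ac-3b²)² (ac+6b²) ≥ 0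
  have h1 : (0:ℝ) ≤ 5 * (a*c - 3*b^2)^2 * (a*c + 6*b^2) := by positivity
  have h2 : a^2 * (5 * a * c ^ 3) ≤ a^2 * (9 * b ^ 3 * d) :=
    mul_le_mul_of_nonneg_left hkey (sq_nonneg a)
  have hb3 : (0:ℝ) < b^3 := by positivity
  nlinarith [mul_pos (mul_pos hb hb) hb, h1, h2, mul_pos ha hc, mul_pos hb3 hb3]
end
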